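/- For every even positive integer n, the sum over even divisors d of n of μ(n/d)·(n/d)·φ(d) equals −μ(n). -/

import Mathlib

open Finset ArithmeticFunction
open scoped ArithmeticFunction.Moebius ArithmeticFunction.zeta

noncomputable def mtcAux_phi : ArithmeticFunction ℕ := ⟨Nat.totient, Nat.totient_zero⟩

lemma mtcAux_phi_apply (n : ℕ) : mtcAux_phi n = Nat.totient n := rfl

lemma mtcAux_phi_mul_zeta : (mtcAux_phi * ζ : ArithmeticFunction ℕ) = ArithmeticFunction.id := by
  ext n
  rw [mul_zeta_apply, ArithmeticFunction.id_apply]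
  simpa [mtcAux_phi_apply] using Nat.sum_totient n

noncomputable def mtcAux_F : ArithmeticFunction ℤ :=
  ArithmeticFunction.pmul μ ((ArithmeticFunction.id : ArithmeticFunction ℕ) : ArithmeticFunction ℤ)

lemma mtcAux_F_apply (n : ℕ) : mtcAux_F n = μ n * (n : ℤ) := rfl

lemma mtcAux_F_mul_id : (mtcAux_F * ((ArithmeticFunction.id : ArithmeticFunction ℕ) : ArithmeticFunction ℤ)) = 1 := by
  ext n
  rw [mul_apply]
  have h1 : ∀ p ∈ n.divisorsAntidiagonal, mtcAux_F p.1 * ((ArithmeticFunction.id : ArithmeticFunction ℕ) : ArithmeticFunction ℤ) p.2 = μ p.1 * (n : ℤ) := by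
    intro p hp
    obtain ⟨hpr, -⟩ := Nat.mem_divisorsAntidiagonal.mp hp
    rw [mtcAux_F_apply, natCoe_apply, ArithmeticFunction.id_apply, mul_assoc, ← Nat.cast_mul, hpr]
  rw [Finset.sum_congr rfl h1, ← Finset.sum_mul]
  have h2 : ∑ p ∈ n.divisorsAntidiagonal, (μ p.1 : ℤ) = (μ * ζ : ArithmeticFunction ℤ) n := by
    rw [mul_apply]
    refine Finset.sum_congr rfl fun p hp => ?_
    obtain ⟨hpr, hn0⟩ := Nat.mem_divisorsAntidiagonal.mp hp
    have h2 : p.2 ≠ 0 := by rintro h; rw [h, mul_zero] at hpr; exact hn0 hpr.symm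
    rw [natCoe_apply, zeta_apply_ne h2, Nat.cast_one, mul_one]
  rw [h2, moebius_mul_coe_zeta]
  rcases eq_or_ne n 1 with rfl | h
  · simp [one_apply]
  · simp [one_apply, h]

lemma mtcAux_F_mul_phi : (mtcAux_F * (mtcAux_phi : ArithmeticFunction ℤ)) = (μ : ArithmeticFunction ℤ) := by
  have : (mtcAux_F * (mtcAux_phi : ArithmeticFunction ℤ)) * ((ζ : ArithmeticFunction ℤ) * μ)
      = (μ : ArithmeticFunction ℤ) := by
    rw [show (mtcAux_F * (mtcAux_phi : ArithmeticFunction ℤ)) * ((ζ : ArithmeticFunction ℤ) * μ)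
        = (mtcAux_F * ((mtcAux_phi : ArithmeticFunction ℤ) * (ζ : ArithmeticFunction ℤ))) * μ by ring]
    have hz : (mtcAux_phi : ArithmeticFunction ℤ) * (ζ : ArithmeticFunction ℤ)
        = ((ArithmeticFunction.id : ArithmeticFunction ℕ) : ArithmeticFunction ℤ) := by
      rw [← natCoe_mul, mtcAux_phi_mul_zeta]
    rw [hz, mtcAux_F_mul_id, one_mul]
  rw [coe_zeta_mul_moebius, mul_one] at this
  exact this

lemma mtcAux_fullsum (n : ℕ) (hn : 0 < n) :
    ∑ d ∈ n.divisors, (μ (n / d)) * ((n / d : ℕ) : ℤ) * (Nat.totient d : ℤ) = μ n := by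
  have := DFunLike.congr_fun mtcAux_F_mul_phi n
  rw [mul_apply] at this
  rw [← this]
  rw [Nat.sum_divisorsAntidiagonal' (f := fun x y => mtcAux_F x * (mtcAux_phi : ArithmeticFunction ℤ) y)]
  refine Finset.sum_congr rfl fun d hd => ?_
  rw [mtcAux_F_apply, natCoe_apply, mtcAux_phi_apply]

theorem moebius_totient_convolution_even_divisors (n : ℕ) (hn : 0 < n) (hne : Even n) :
    ∑ d ∈ n.divisors.filter (fun d => Even d),
        (ArithmeticFunction.moebius (n / d)) * ((n / d : ℕ) : ℤ) * (Nat.totient d : ℤ)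
      = -ArithmeticFunction.moebius n := by
  induction n using Nat.strong_induction_on with
  | _ n ih =>
  obtain ⟨m, rfl⟩ := hne
  rw [← two_mul] at hn ih ⊢
  have hm0 : 0 < m := by omega
  -- rewrite the filtered divisor set as the image of e ↦ 2e
  have hset : (2 * m).divisors.filter (fun d => Even d)
      = m.divisors.map ⟨(2 * ·), fun ⦃a b⦄ h => Nat.eq_of_mul_eq_mul_left two_pos h⟩ := by
    ext d
    simp only [Finset.mem_filter, Nat.mem_divisors, Finset.mem_map,
      Function.Embedding.coeFn_mk]
    constructor
    · rintro ⟨⟨hd, -⟩, c, rfl⟩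
      rw [← two_mul] at hd ⊢
      exact ⟨c, ⟨(mul_dvd_mul_iff_left (two_ne_zero)).mp hd, hm0.ne'⟩, rfl⟩
    · rintro ⟨e, ⟨he, -⟩, rfl⟩
      exact ⟨⟨mul_dvd_mul_left 2 he, by positivity⟩, e, two_mul e⟩
  rw [hset, Finset.sum_map]
  show ∑ e ∈ m.divisors, μ (2 * m / (2 * e)) * ((2 * m / (2 * e) : ℕ) : ℤ) * (Nat.totient (2 * e) : ℤ) = -μ (2 * m)
  have hdiv : ∀ e : ℕ, 2 * m / (2 * e) = m / e := fun e => Nat.mul_div_mul_left m e two_pos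
  have hphi : ∀ e ∈ m.divisors,
      (μ (2 * m / (2 * e))) * ((2 * m / (2 * e) : ℕ) : ℤ) * (Nat.totient (2 * e) : ℤ)
      = (μ (m / e)) * ((m / e : ℕ) : ℤ) * (Nat.totient e : ℤ)
        + (if Even e then (μ (m / e)) * ((m / e : ℕ) : ℤ) * (Nat.totient e : ℤ) else 0) := by
    intro e he
    rw [hdiv]
    rcases Nat.even_or_odd e with hpar | hpar
    · rw [Nat.totient_mul_of_prime_of_dvd Nat.prime_two hpar.two_dvd, if_pos hpar]
      push_cast; ring
    · rw [Nat.totient_mul (Nat.coprime_two_left.mpr hpar), Nat.totient_two,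
        if_neg (by simpa using hpar)]
      push_cast; ring
  rw [Finset.sum_congr rfl hphi, Finset.sum_add_distrib, mtcAux_fullsum m hm0]
  have hsplit : ∑ e ∈ m.divisors,
      (if Even e then (μ (m / e)) * ((m / e : ℕ) : ℤ) * (Nat.totient e : ℤ) else 0)
      = ∑ e ∈ m.divisors.filter (fun e => Even e),
          (μ (m / e)) * ((m / e : ℕ) : ℤ) * (Nat.totient e : ℤ) :=
    (Finset.sum_filter _ _).symm
  rw [hsplit]
  rcases Nat.even_or_odd m with hme | hmo
  · rw [ih m (by omega) hm0 hme]
    have h4 : ¬ Squarefree (2 * m) := by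
      intro hsq
      obtain ⟨c, rfl⟩ := hme
      have := hsq 2 ⟨c, by ring⟩
      norm_num [Nat.isUnit_iff] at this
    rw [moebius_eq_zero_of_not_squarefree h4]
    ring
  · have hempty : m.divisors.filter (fun e => Even e) = ∅ := by
      rw [Finset.filter_eq_empty_iff]
      intro e he hev
      exact (Nat.not_even_iff_odd.mpr hmo) ((hev.two_dvd.trans (Nat.mem_divisors.mp he).1).elim
        fun c hc => ⟨c, by omega⟩)
    rw [hempty, Finset.sum_empty, add_zero,
      isMultiplicative_moebius.map_mul_of_coprime (Nat.coprime_two_left.mpr hmo),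
      moebius_apply_prime Nat.prime_two]
    ring
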